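/- Let G be a connected triangle-free non-bipartite simple graph on an odd number of vertices. Then every matrix M ∈ S(G) has at least 3 distinct eigenvalues; that is, q(G) ≥ 3. -/

import Mathlib

/-- `S(G)`: real symmetric matrices whose off-diagonal zero/nonzero pattern
matches the adjacency of `G`; the diagonal is unconstrained. -/
def Sset {V : Type*} [Fintype V] [DecidableEq V] (G : SimpleGraph V) : Set (Matrix V V ℝ) :=
  {M | M.IsSymm ∧ ∀ u v : V, u ≠ v → (M u v ≠ 0 ↔ G.Adj u v)}

/-- `q(G)`: the minimum number of distinct eigenvalues over matrices in `S(G)`. -/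
noncomputable def minQ {V : Type*} [Fintype V] [DecidableEq V] (G : SimpleGraph V) : ℕ :=
  sInf {k : ℕ | ∃ M ∈ Sset G, (spectrum ℝ M).ncard = k}

lemma key_core {V : Type*} [Fintype V] [DecidableEq V] (G : SimpleGraph V)
    (hconn : G.Connected) (htf : G.CliqueFree 3) (hnb : ¬ G.Colorable 2)
    (hodd : Odd (Fintype.card V)) :
    ∀ M ∈ Sset G, 3 ≤ (spectrum ℝ M).ncard := by
  intro M hMmem
  obtain ⟨hsym, hpat⟩ := hMmem
  have hV : Nonempty V := by
    have hne : Fintype.card V ≠ 0 := by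
      intro h; rw [h] at hodd; simp at hodd
    exact Fintype.card_pos_iff.mp (Nat.pos_of_ne_zero hne)
  have hM : M.IsHermitian := by
    rw [Matrix.IsHermitian, Matrix.conjTranspose_eq_transpose_of_trivial]
    exact hsym
  set ev : V → ℝ := hM.eigenvalues with hev
  have hspec : spectrum ℝ M = Set.range ev := hM.spectrum_real_eq_range_eigenvalues
  by_contra h3
  push_neg at h3
  -- The range of eigenvalues is contained in a two-element set {a, b}, a ≠ b.
  have hcard : (Finset.image ev Finset.univ).card ≤ 2 := by
    have hre : Set.range ev = ↑(Finset.image ev Finset.univ) := by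
      ext x; simp
    have : (spectrum ℝ M).ncard = (Finset.image ev Finset.univ).card := by
      rw [hspec, hre, Set.ncard_coe_finset]
    omega
  obtain ⟨a, b, hab, hmem⟩ : ∃ a b : ℝ, a ≠ b ∧ ∀ i : V, ev i = a ∨ ev i = b := by
    obtain ⟨i0⟩ := hV
    set a := ev i0 with ha
    by_cases hb : ∃ j, ev j ≠ a
    · obtain ⟨j, hj⟩ := hb
      refine ⟨a, ev j, fun h => hj h.symm, ?_⟩
      intro i
      by_contra hcon
      push_neg at hcon
      have hsub : ({a, ev j, ev i} : Finset ℝ) ⊆ Finset.image ev Finset.univ := by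
        intro x hx
        simp only [Finset.mem_insert, Finset.mem_singleton] at hx
        rcases hx with rfl | rfl | rfl <;> simp [ha] <;> exact ⟨_, rfl⟩
      have hc3 : ({a, ev j, ev i} : Finset ℝ).card = 3 :=
        Finset.card_eq_three.mpr ⟨a, ev j, ev i, Ne.symm hj, Ne.symm hcon.1, Ne.symm hcon.2, rfl⟩
      have := Finset.card_le_card hsub
      omega
    · push_neg at hb
      exact ⟨a, a + 1, by norm_num, fun i => Or.inl (hb i)⟩
  -- The quadratic (x - a)(x - b) annihilates M.
  set Uc : Matrix V V ℝ := (hM.eigenvectorUnitary : Matrix V V ℝ) with hUc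
  have h1 : Uc * star Uc = 1 := (Matrix.mem_unitaryGroup_iff).mp hM.eigenvectorUnitary.2
  have h2 : star Uc * Uc = 1 := (Matrix.mem_unitaryGroup_iff').mp hM.eigenvectorUnitary.2
  have hcomp : (RCLike.ofReal ∘ ev : V → ℝ) = ev := by
    funext i; simp [RCLike.ofReal_real_eq_id]
  set D : Matrix V V ℝ := Matrix.diagonal ev with hD
  have hs : M = Uc * D * star Uc := by
    have := hM.spectral_theorem
    rwa [hcomp] at this
  have hDD : D * D = (a + b) • D - (a * b) • (1 : Matrix V V ℝ) := by
    rw [hD, Matrix.diagonal_mul_diagonal]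
    ext i j
    rcases eq_or_ne i j with rfl | hij
    · simp only [Matrix.diagonal_apply_eq, Matrix.sub_apply, Matrix.smul_apply,
        Matrix.one_apply_eq, smul_eq_mul, mul_one]
      rcases hmem i with h | h <;> rw [h] <;> ring
    · simp [Matrix.diagonal_apply_ne _ hij, Matrix.one_apply_ne hij]
  have hquad : M * M = (a + b) • M - (a * b) • (1 : Matrix V V ℝ) := by
    calc M * M = Uc * D * (star Uc * Uc) * D * star Uc := by
          rw [hs]; simp only [Matrix.mul_assoc]
      _ = Uc * (D * D) * star Uc := by rw [h2]; simp only [Matrix.mul_one, Matrix.mul_assoc]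
      _ = (a + b) • (Uc * D * star Uc) - (a * b) • (Uc * star Uc) := by
          rw [hDD, Matrix.mul_sub, Matrix.sub_mul]
          simp only [Matrix.mul_smul, Matrix.smul_mul, Matrix.mul_one, Matrix.mul_assoc]
      _ = (a + b) • M - (a * b) • (1 : Matrix V V ℝ) := by rw [← hs, h1]
  -- For every edge, the diagonal entries sum to a + b.
  have hedge : ∀ u v : V, G.Adj u v → M u u + M v v = a + b := by
    intro u v huv
    have hne : u ≠ v := huv.ne
    have hMuv : M u v ≠ 0 := (hpat u v hne).mpr huv
    have hterm : ∀ w : V, w ∉ ({u, v} : Finset V) → M u w * M w v = 0 := by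
      intro w hw
      simp only [Finset.mem_insert, Finset.mem_singleton, not_or] at hw
      by_contra hcon
      have h1' : M u w ≠ 0 := fun h => hcon (by rw [h, zero_mul])
      have h2' : M w v ≠ 0 := fun h => hcon (by rw [h, mul_zero])
      have hadj1 : G.Adj u w := (hpat u w (Ne.symm hw.1)).mp h1'
      have hadj2 : G.Adj w v := (hpat w v hw.2).mp h2'
      exact htf {u, v, w} (SimpleGraph.is3Clique_triple_iff.mpr ⟨huv, hadj1, hadj2.symm⟩)
    have hsum : (M * M) u v = M u u * M u v + M u v * M v v := by
      rw [Matrix.mul_apply]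
      rw [← Finset.sum_subset (Finset.subset_univ ({u, v} : Finset V))
        (fun w _ hw => hterm w hw)]
      rw [Finset.sum_pair hne]
    have hsum' : (M * M) u v = (a + b) * M u v := by
      rw [hquad]
      simp [Matrix.sub_apply, Matrix.smul_apply, Matrix.one_apply_ne hne]
    have : (M u u + M v v) * M u v = (a + b) * M u v := by
      rw [add_mul]; rw [hsum] at hsum'; linarith [hsum']
    exact mul_right_cancel₀ hMuv this
  -- Case analysis on whether some diagonal entry equals (a+b)/2.
  by_cases h0 : ∃ u : V, M u u = (a + b) / 2
  · -- all diagonal entries equal (a+b)/2, contradiction with odd order via trace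
    obtain ⟨u0, hu0⟩ := h0
    have hall : ∀ v : V, M v v = (a + b) / 2 := by
      have hwalk : ∀ {x y : V} (_ : G.Walk x y), M x x = (a + b) / 2 → M y y = (a + b) / 2 := by
        intro x y p
        induction p with
        | nil => exact id
        | cons h _ ih =>
          intro hx
          apply ih
          have := hedge _ _ h
          linarith
      intro v
      obtain ⟨p⟩ := hconn.preconnected u0 v
      exact hwalk p hu0
    -- trace via diagonal entries
    have htr1 : M.trace = (Fintype.card V : ℝ) * ((a + b) / 2) := by
      rw [Matrix.trace]
      simp only [Matrix.diag]
      rw [Finset.sum_congr rfl (fun v _ => hall v)]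
      simp [mul_comm]
    -- trace via eigenvalues
    have htr2 : M.trace = ∑ i : V, ev i := by
      conv_lhs => rw [hs]
      rw [Matrix.trace_mul_cycle, h2, Matrix.one_mul]
      simp [hD, Matrix.trace_diagonal]
    set k := (Finset.univ.filter (fun i : V => ev i = a)).card with hk
    have hsplit : ∑ i : V, ev i = (k : ℝ) * a + ((Fintype.card V : ℝ) - k) * b := by
      rw [← Finset.sum_filter_add_sum_filter_not Finset.univ (fun i : V => ev i = a)]
      have e1 : ∑ i ∈ Finset.univ.filter (fun i : V => ev i = a), ev i = (k : ℝ) * a := by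
        rw [Finset.sum_congr rfl (fun i hi => (Finset.mem_filter.mp hi).2)]
        simp [hk]
      have hbv : ∀ i ∈ Finset.univ.filter (fun i : V => ¬ ev i = a), ev i = b := by
        intro i hi
        have hia := (Finset.mem_filter.mp hi).2
        rcases hmem i with h | h
        · exact absurd h hia
        · exact h
      have e2 : ∑ i ∈ Finset.univ.filter (fun i : V => ¬ ev i = a), ev i
          = ((Fintype.card V : ℝ) - k) * b := by
        rw [Finset.sum_congr rfl hbv, Finset.sum_const, nsmul_eq_mul]
        have hcV : (Finset.univ.filter (fun i : V => ev i = a)).card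
            + (Finset.univ.filter (fun i : V => ¬ ev i = a)).card = Fintype.card V := by
          simpa using Finset.card_filter_add_card_filter_not
            (s := (Finset.univ : Finset V)) (p := fun i : V => ev i = a)
        have h2c : (Finset.univ.filter (fun i : V => ¬ ev i = a)).card
            = Fintype.card V - k := by omega
        have hkle : k ≤ Fintype.card V := by omega
        rw [h2c, Nat.cast_sub hkle]
      rw [e1, e2]
    have heq : (Fintype.card V : ℝ) * ((a + b) / 2) = (k : ℝ) * a + ((Fintype.card V : ℝ) - k) * b := by
      rw [← htr1, htr2, hsplit]
    have hnk : (Fintype.card V : ℝ) = 2 * k := by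
      have hab' : a - b ≠ 0 := sub_ne_zero.mpr hab
      have : ((Fintype.card V : ℝ) - 2 * k) * (a - b) = 0 := by ring_nf; linarith [heq]
      rcases mul_eq_zero.mp this with h | h
      · linarith
      · exact absurd h hab'
    have : Fintype.card V = 2 * k := by exact_mod_cast hnk
    rw [this] at hodd
    simp [Nat.odd_iff] at hodd
  · -- build a proper 2-coloring, contradiction with non-bipartiteness
    push_neg at h0
    apply hnb
    refine ⟨SimpleGraph.Coloring.mk (fun u => if M u u < (a + b) / 2 then 0 else 1) ?_⟩
    intro u v huv heq
    have hsum := hedge u v huv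
    have hu := h0 u
    have hv := h0 v
    by_cases hcu : M u u < (a + b) / 2
    · have hcv : ¬ M v v < (a + b) / 2 := by intro h; linarith [lt_of_le_of_ne (le_of_lt hcu) hu]
      simp [hcu, hcv] at heq
    · have hgt : M u u > (a + b) / 2 := lt_of_le_of_ne (not_lt.mp hcu) (Ne.symm hu)
      have hcv : M v v < (a + b) / 2 := by linarith
      simp [hcu, hcv] at heq

/-- If `G` is a connected triangle-free non-bipartite graph of odd order,
then every `M ∈ S(G)` has at least `3` distinct eigenvalues; that is, `q(G) ≥ 3`. -/
theorem stmt_3 {V : Type*} [Fintype V] [DecidableEq V] (G : SimpleGraph V)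
    (hconn : G.Connected) (htf : G.CliqueFree 3) (hnb : ¬ G.Colorable 2)
    (hodd : Odd (Fintype.card V)) :
    (∀ M ∈ Sset G, 3 ≤ (spectrum ℝ M).ncard) ∧ 3 ≤ minQ G := by
  have key := key_core G hconn htf hnb hodd
  refine ⟨key, ?_⟩
  apply le_csInf
  · classical
    refine ⟨(spectrum ℝ (G.adjMatrix ℝ)).ncard, G.adjMatrix ℝ, ⟨?_, ?_⟩, rfl⟩
    · exact SimpleGraph.isSymm_adjMatrix G
    · intro u v _
      by_cases h : G.Adj u v <;> simp [SimpleGraph.adjMatrix_apply, h]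
  · rintro k ⟨M, hM, rfl⟩
    exact key M hM
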